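/- For every integer n ≥ 3 and every z ∈ [n−1, (n−1)²], one has g(n, z, ln(n−1)/(2·ln z)) > 0. -/

import Mathlib

open Real

/-- `g(n, z, α) = (α−1) + ((n−1) + z^α)(z^{1−α} − 1)/(((n−1) + z) ln z)`. -/
noncomputable def gZ (n : ℕ) (z α : ℝ) : ℝ :=
  (α - 1) + (((n : ℝ) - 1) + z ^ α) * (z ^ (1 - α) - 1) / ((((n : ℝ) - 1) + z) * Real.log z)

lemma aux1 {s : ℝ} (hs : 1 < s) : Real.log s < (s ^ 2 - 1) / (2 * s) := by
  have hmono : StrictMonoOn (fun x : ℝ => (x ^ 2 - 1) / (2 * x) - Real.log x) (Set.Ici 1) := by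
    apply strictMonoOn_of_deriv_pos (convex_Ici 1)
    · apply ContinuousOn.sub
      · apply ContinuousOn.div (by fun_prop) (by fun_prop)
        intro x hx
        have hx1 : (1:ℝ) ≤ x := hx
        positivity
      · apply Real.continuousOn_log.mono
        intro x hx
        have hx1 : (1:ℝ) ≤ x := hx
        simp
        linarith
    · intro x hx
      rw [interior_Ici] at hx
      have hx1 : (1:ℝ) < x := hx
      have hx0 : (0:ℝ) < x := by linarith
      have hd : HasDerivAt (fun x : ℝ => (x ^ 2 - 1) / (2 * x) - Real.log x)
          ((x - 1) ^ 2 / (2 * x ^ 2)) x := by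
        have h := (((hasDerivAt_pow 2 x).sub_const 1).div
          ((hasDerivAt_id x).const_mul 2) (by simp; positivity)).sub (Real.hasDerivAt_log hx0.ne')
        simp only [Pi.sub_def, Pi.div_def, id] at h
        refine h.congr_deriv ?_
        field_simp
        ring
      rw [hd.deriv]
      exact div_pos (pow_pos (by linarith) 2) (by positivity)
  have h := hmono (Set.self_mem_Ici) (show s ∈ Set.Ici (1:ℝ) from hs.le) hs
  norm_num at h
  linarith

lemma aux2 {s : ℝ} (hs : 1 < s) :
    3 * Real.log s < (s ^ 4 + s ^ 3 - s - 1) / (s ^ 3 + s) := by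
  have hmono : StrictMonoOn
      (fun x : ℝ => (x ^ 4 + x ^ 3 - x - 1) / (x ^ 3 + x) - 3 * Real.log x) (Set.Ici 1) := by
    apply strictMonoOn_of_deriv_pos (convex_Ici 1)
    · apply ContinuousOn.sub
      · apply ContinuousOn.div (by fun_prop) (by fun_prop)
        intro x hx
        have hx1 : (1:ℝ) ≤ x := hx
        positivity
      · exact continuousOn_const.mul (Real.continuousOn_log.mono (fun x hx => by
          have hx1 : (1:ℝ) ≤ x := hx
          simp
          linarith))
    · intro x hx
      rw [interior_Ici] at hx
      have hx1 : (1:ℝ) < x := hx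
      have hx0 : (0:ℝ) < x := by linarith
      have hd : HasDerivAt (fun x : ℝ => (x ^ 4 + x ^ 3 - x - 1) / (x ^ 3 + x) - 3 * Real.log x)
          ((x ^ 2 + x + 1) * (x - 1) ^ 4 / ((x ^ 3 + x) ^ 2)) x := by
        have hnum : HasDerivAt (fun x : ℝ => x ^ 4 + x ^ 3 - x - 1)
            ((4:ℝ) * x ^ 3 + (3:ℝ) * x ^ 2 - 1) x := by
          simpa using (((hasDerivAt_pow 4 x).add (hasDerivAt_pow 3 x)).sub
            (hasDerivAt_id x)).sub_const 1
        have hden : HasDerivAt (fun x : ℝ => x ^ 3 + x) ((3:ℝ) * x ^ 2 + 1) x := by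
          simpa [Pi.add_def] using (hasDerivAt_pow 3 x).add (hasDerivAt_id' x)
        have hlog3 : HasDerivAt (fun x : ℝ => 3 * Real.log x) (3 * x⁻¹) x :=
          (Real.hasDerivAt_log hx0.ne').const_mul 3
        have h := (hnum.div hden (by positivity)).sub hlog3
        simp only [Pi.sub_def, Pi.div_def] at h
        refine h.congr_deriv ?_
        field_simp
        ring
      rw [hd.deriv]
      exact div_pos (mul_pos (by positivity) (pow_pos (by linarith) 4)) (by positivity)
  have h := hmono (Set.self_mem_Ici) (show s ∈ Set.Ici (1:ℝ) from hs.le) hs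
  norm_num at h
  linarith

lemma aux3 {s t : ℝ} (hs : 1 < s) (h1 : s ≤ t) (h2 : t ≤ s ^ 3) :
    Real.log t < (s + 1) * (t - 1) / (s + t) := by
  have hs0 : (0:ℝ) < s := by linarith
  set f : ℝ → ℝ := fun x => (s + 1) * (x - 1) / (s + x) - Real.log x with hf
  have hderiv : ∀ x : ℝ, 0 < x → HasDerivAt f ((x - 1) * (s ^ 2 - x) / (x * (s + x) ^ 2)) x := by
    intro x hx0
    have h := ((((hasDerivAt_id x).sub_const 1).const_mul (s + 1)).div
        ((hasDerivAt_id x).const_add s) (by simp only [id]; positivity)).sub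
        (Real.hasDerivAt_log hx0.ne')
    simp only [Pi.sub_def, Pi.div_def, Pi.mul_def, id] at h
    refine h.congr_deriv ?_
    field_simp
    ring
  have hcont : ∀ x ∈ {y : ℝ | 0 < y}, ContinuousWithinAt f {y : ℝ | 0 < y} x :=
    fun x hx => (hderiv x hx).continuousAt.continuousWithinAt
  have hsub1 : Set.Icc s (s ^ 2) ⊆ {y : ℝ | 0 < y} := fun x hx => by
    have := hx.1; simp only [Set.mem_setOf_eq]; linarith
  have hsub2 : Set.Icc (s ^ 2) (s ^ 3) ⊆ {y : ℝ | 0 < y} := fun x hx => by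
    have := hx.1; have hs2 : (1:ℝ) < s ^ 2 := by nlinarith
    simp only [Set.mem_setOf_eq]; linarith
  have hs12 : s ≤ s ^ 2 := by nlinarith
  have hs23 : s ^ 2 ≤ s ^ 3 := by nlinarith
  rcases le_or_gt t (s ^ 2) with hcase | hcase
  · -- f strictly monotone on [s, s²], so f t ≥ f s > 0
    have hmono : StrictMonoOn f (Set.Icc s (s ^ 2)) := by
      apply strictMonoOn_of_deriv_pos (convex_Icc _ _)
        (fun x hx => (hcont x (hsub1 hx)).mono hsub1)
      intro x hx
      rw [interior_Icc] at hx
      obtain ⟨ha, hb⟩ := hx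
      have hx0 : (0:ℝ) < x := by linarith
      rw [(hderiv x hx0).deriv]
      apply div_pos (mul_pos (by linarith) (by linarith)) (by positivity)
    have hle : f s ≤ f t := by
      rcases eq_or_lt_of_le h1 with rfl | hlt
      · exact le_refl _
      · exact (hmono ⟨le_refl s, hs12⟩ ⟨h1, hcase⟩ hlt).le
    have hfs : 0 < f s := by
      have key := aux1 hs
      have : f s = (s ^ 2 - 1) / (2 * s) - Real.log s := by
        rw [hf]
        have : (s + 1) * (s - 1) / (s + s) = (s ^ 2 - 1) / (2 * s) := by ring
        simp only [this]
      rw [this]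
      linarith
    have : 0 < f t := lt_of_lt_of_le hfs hle
    rw [hf] at this
    simp only at this
    linarith
  · -- f strictly antitone on [s², s³], so f t ≥ f (s³) > 0
    have hanti : StrictAntiOn f (Set.Icc (s ^ 2) (s ^ 3)) := by
      apply strictAntiOn_of_deriv_neg (convex_Icc _ _)
        (fun x hx => (hcont x (hsub2 hx)).mono hsub2)
      intro x hx
      rw [interior_Icc] at hx
      obtain ⟨ha, hb⟩ := hx
      have hs2 : (1:ℝ) < s ^ 2 := by nlinarith
      have hx0 : (0:ℝ) < x := by linarith
      rw [(hderiv x hx0).deriv]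
      apply div_neg_of_neg_of_pos (mul_neg_of_pos_of_neg (by linarith) (by linarith)) (by positivity)
    have hle : f (s ^ 3) ≤ f t := by
      rcases eq_or_lt_of_le h2 with rfl | hlt
      · exact le_refl _
      · exact (hanti ⟨hcase.le, h2⟩ ⟨hs23, le_refl _⟩ hlt).le
    have hfs3 : 0 < f (s ^ 3) := by
      have key := aux2 hs
      have hlog : Real.log (s ^ 3) = 3 * Real.log s := by
        rw [Real.log_pow]; push_cast; ring
      have : f (s ^ 3) = (s ^ 4 + s ^ 3 - s - 1) / (s ^ 3 + s) - 3 * Real.log s := by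
        rw [hf]
        simp only
        rw [hlog]
        have : (s + 1) * (s ^ 3 - 1) / (s + s ^ 3) = (s ^ 4 + s ^ 3 - s - 1) / (s ^ 3 + s) := by
          ring
        rw [this]
      rw [this]
      linarith
    have : 0 < f t := lt_of_lt_of_le hfs3 hle
    rw [hf] at this
    simp only at this
    linarith

theorem stmt19 (n : ℕ) (hn : 3 ≤ n) (z : ℝ)
    (hz : z ∈ Set.Icc ((n : ℝ) - 1) (((n : ℝ) - 1) ^ 2)) :
    0 < gZ n z (Real.log ((n : ℝ) - 1) / (2 * Real.log z)) := by
  obtain ⟨hz1, hz2⟩ := hz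
  set m : ℝ := (n : ℝ) - 1 with hm
  have hn3 : (3:ℝ) ≤ (n : ℝ) := by exact_mod_cast hn
  have hm2 : 2 ≤ m := by rw [hm]; linarith
  have hm1 : 1 < m := by linarith
  have hm0 : 0 < m := by linarith
  set s : ℝ := Real.sqrt m with hsdef
  have hs0 : 0 < s := Real.sqrt_pos.mpr hm0
  have hss : s ^ 2 = m := Real.sq_sqrt hm0.le
  have hs1 : 1 < s := by nlinarith [hss]
  have hzpos : 0 < z := by linarith
  have hz1' : 1 < z := by linarith
  have hlz : 0 < Real.log z := Real.log_pos hz1'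
  set α : ℝ := Real.log m / (2 * Real.log z) with hα
  -- z ^ α = s
  have hzα : z ^ α = s := by
    rw [Real.rpow_def_of_pos hzpos, hα]
    rw [show Real.log z * (Real.log m / (2 * Real.log z)) = Real.log m / 2 by
      field_simp]
    rw [← Real.log_sqrt hm0.le, Real.exp_log hs0]
  -- z ^ (1 - α) = z / s
  have hz1α : z ^ (1 - α) = z / s := by
    rw [Real.rpow_sub hzpos, Real.rpow_one, hzα]
  set t : ℝ := z / s with htdef
  have hzst : z = s * t := by rw [htdef]; field_simp
  have ht1 : s ≤ t := by
    rw [htdef, le_div_iff₀ hs0]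
    nlinarith [hss]
  have ht2 : t ≤ s ^ 3 := by
    rw [htdef, div_le_iff₀ hs0]
    nlinarith [hss]
  have hst : 0 < s + t := by linarith
  have key : Real.log t < (s + 1) * (t - 1) / (s + t) := aux3 hs1 ht1 ht2
  have hlogt : Real.log t = (1 - α) * Real.log z := by
    rw [htdef, Real.log_div hzpos.ne' hs0.ne', hsdef, Real.log_sqrt hm0.le, hα]
    field_simp
  -- turn key into the bound on 1 - α
  have h2 : (1 - α) * Real.log z < (s + 1) * (t - 1) / (s + t) := hlogt ▸ key
  have h3 : 1 - α < (s + 1) * (t - 1) / ((s + t) * Real.log z) := by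
    rw [lt_div_iff₀ (by positivity)]
    calc (1 - α) * ((s + t) * Real.log z) = ((1 - α) * Real.log z) * (s + t) := by ring
      _ < ((s + 1) * (t - 1) / (s + t)) * (s + t) := by
          exact mul_lt_mul_of_pos_right h2 hst
      _ = (s + 1) * (t - 1) := by field_simp
  -- rewrite gZ
  have hgeq : gZ n z α = (α - 1) + (s + 1) * (t - 1) / ((s + t) * Real.log z) := by
    rw [gZ, ← hm, hzα, hz1α]
    congr 1
    rw [hzst]
    rw [show m = s ^ 2 from hss.symm]
    rw [show s ^ 2 + s * t = s * (s + t) by ring,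
        show (s ^ 2 + s) * (t - 1) = s * ((s + 1) * (t - 1)) by ring,
        show s * (s + t) * Real.log (s * t) = s * ((s + t) * Real.log (s * t)) by ring]
    exact mul_div_mul_left _ _ hs0.ne'
  rw [hgeq]
  linarith
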